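/- Let Q be a positive definite quadratic form on Z^r, and suppose Q(x) ≥ c₁ > 0 for all nonzero x ∈ Z^r. Then the number of x ∈ Z^r with Q(x) ≤ c₂ is at most (1 + 2√(c₂/c₁))^r. -/

import Mathlib

open MeasureTheory Metric
open scoped ENNReal

lemma packing {n : ℕ} (s : Finset (EuclideanSpace ℝ (Fin n))) (R d : ℝ) (hd : 0 < d)
    (hR : 0 ≤ R) (hs : ∀ x ∈ s, ‖x‖ ≤ R)
    (hsep : ∀ x ∈ s, ∀ y ∈ s, x ≠ y → d ≤ dist x y) :
    (s.card : ℝ) ≤ ((2 * R + d) / d) ^ n := by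
  have hd2 : (0:ℝ) < d / 2 := by linarith
  have hdisj : (s : Set (EuclideanSpace ℝ (Fin n))).PairwiseDisjoint
      (fun x => ball x (d / 2)) := by
    intro x hx y hy hxy
    refine Set.disjoint_left.2 fun z hzx hzy => ?_
    have := hsep x hx y hy hxy
    have h1 : dist x z < d / 2 := by simpa [dist_comm] using hzx
    have h2 : dist z y < d / 2 := by simpa [dist_comm] using hzy
    have := dist_triangle x z y
    linarith
  have hsub : ∀ x ∈ s, ball x (d / 2) ⊆ ball (0 : EuclideanSpace ℝ (Fin n)) (R + d / 2) := by
    intro x hx z hz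
    simp only [mem_ball] at hz ⊢
    have := hs x hx
    have hxz : dist z x < d / 2 := hz
    have : dist z 0 ≤ dist z x + dist x 0 := dist_triangle _ _ _
    simp only [dist_zero_right] at this ⊢
    linarith
  have hmeas : (volume (⋃ x ∈ s, ball x (d / 2)))
      = ∑ x ∈ s, volume (ball x (d / 2)) :=
    measure_biUnion_finset hdisj (fun x _ => measurableSet_ball)
  have hle : ∑ x ∈ s, volume (ball x (d / 2))
      ≤ volume (ball (0 : EuclideanSpace ℝ (Fin n)) (R + d / 2)) := by
    rw [← hmeas]
    exact measure_mono (Set.iUnion₂_subset hsub)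
  have hfr : Module.finrank ℝ (EuclideanSpace ℝ (Fin n)) = n := finrank_euclideanSpace_fin
  have hb : ∀ x : EuclideanSpace ℝ (Fin n), volume (ball x (d / 2))
      = ENNReal.ofReal ((d / 2) ^ n) * volume (ball (0 : EuclideanSpace ℝ (Fin n)) 1) := by
    intro x; rw [Measure.addHaar_ball_of_pos volume x hd2, hfr]
  have hbig : volume (ball (0 : EuclideanSpace ℝ (Fin n)) (R + d / 2))
      = ENNReal.ofReal ((R + d / 2) ^ n) * volume (ball (0 : EuclideanSpace ℝ (Fin n)) 1) := by
    rw [Measure.addHaar_ball_of_pos volume _ (by linarith : (0:ℝ) < R + d / 2), hfr]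
  set V := volume (ball (0 : EuclideanSpace ℝ (Fin n)) 1) with hV
  have hVpos : 0 < V := measure_ball_pos _ _ one_pos
  have hVlt : V < ⊤ := measure_ball_lt_top
  have key : (s.card : ℝ≥0∞) * (ENNReal.ofReal ((d / 2) ^ n))
      ≤ ENNReal.ofReal ((R + d / 2) ^ n) := by
    have : (s.card : ℝ≥0∞) * (ENNReal.ofReal ((d / 2) ^ n)) * V
        ≤ ENNReal.ofReal ((R + d / 2) ^ n) * V := by
      calc (s.card : ℝ≥0∞) * (ENNReal.ofReal ((d / 2) ^ n)) * V
          = ∑ x ∈ s, volume (ball x (d / 2)) := by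
            simp [hb, Finset.sum_const, mul_assoc]
        _ ≤ _ := hle.trans_eq hbig
    exact (ENNReal.mul_le_mul_iff_left hVpos.ne' hVlt.ne).1 this
  have key2 : (s.card : ℝ) * (d / 2) ^ n ≤ (R + d / 2) ^ n := by
    have h : ENNReal.ofReal ((s.card : ℝ) * (d / 2) ^ n) ≤ ENNReal.ofReal ((R + d / 2) ^ n) := by
      rw [ENNReal.ofReal_mul (by positivity : (0:ℝ) ≤ (s.card:ℝ))]
      simpa [ENNReal.ofReal_natCast] using key
    exact (ENNReal.ofReal_le_ofReal_iff (by positivity)).1 h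
  have hdd : (2 * R + d) / d = (R + d / 2) / (d / 2) := by
    field_simp
  rw [hdd, div_pow, le_div_iff₀ (by positivity)]
  exact key2



/-- Let `Q` be a positive definite quadratic form on `ℤ^r` (i.e. the
restriction to integer vectors of a positive definite real quadratic form), and suppose
`Q x ≥ c₁ > 0` for all nonzero integer vectors `x`. Then the number of integer vectors `x`
with `Q x ≤ c₂` is at most `(1 + 2√(c₂/c₁))^r`. -/
theorem stmt0 (r : ℕ) (Q : QuadraticForm ℝ (Fin r → ℝ)) (hQ : Q.PosDef)
    (c₁ c₂ : ℝ) (hc₁ : 0 < c₁) (hc₂ : 0 < c₂)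
    (hlow : ∀ x : Fin r → ℤ, x ≠ 0 → c₁ ≤ Q (fun i => (x i : ℝ))) :
    {x : Fin r → ℤ | Q (fun i => (x i : ℝ)) ≤ c₂}.Finite ∧
      ({x : Fin r → ℤ | Q (fun i => (x i : ℝ)) ≤ c₂}.ncard : ℝ)
        ≤ (1 + 2 * Real.sqrt (c₂ / c₁)) ^ r := by
  classical
  set S := {x : Fin r → ℤ | Q (fun i => (x i : ℝ)) ≤ c₂} with hS
  have hsepL : (QuadraticMap.associated (R := ℝ) Q).SeparatingLeft :=
    QuadraticMap.separatingLeft_of_anisotropic Q hQ.anisotropic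
  obtain ⟨w, hw, ⟨F⟩⟩ := Q.equivalent_one_neg_one_weighted_sum_squared hsepL
  have hn : Module.finrank ℝ (Fin r → ℝ) = r := Module.finrank_fin_fun ℝ
  -- the weights are all 1
  have hw1 : ∀ i, w i = 1 := by
    intro i
    have h0 : F.symm (Pi.single i 1) ≠ 0 := by
      intro h
      have := F.symm.toLinearEquiv.map_eq_zero_iff.mp h
      simpa [Pi.single_eq_same] using congrFun this i
    have hWi : (QuadraticMap.weightedSumSquares ℝ w) (Pi.single i (1:ℝ)) = w i := by
      rw [QuadraticMap.weightedSumSquares_apply]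
      rw [Finset.sum_eq_single i]
      · simp
      · intro j _ hj; simp [Pi.single_eq_of_ne hj]
      · intro h; exact absurd (Finset.mem_univ i) h
    have hpos : 0 < w i := by
      have h1 := hQ _ h0
      rw [F.symm.map_app, hWi] at h1
      exact h1
    rcases hw i with h | h
    · exfalso; rw [h] at hpos; linarith
    · exact h
  -- Q v equals the squared Euclidean norm of F v
  set emb : (Fin r → ℝ) → EuclideanSpace ℝ (Fin (Module.finrank ℝ (Fin r → ℝ))) :=
    fun v => (WithLp.equiv 2 _).symm (F v) with hemb
  have hQnorm : ∀ v : Fin r → ℝ, ‖emb v‖ ^ 2 = Q v := by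
    intro v
    rw [EuclideanSpace.norm_eq, Real.sq_sqrt (by positivity)]
    have hFv := F.map_app v
    rw [QuadraticMap.weightedSumSquares_apply] at hFv
    rw [← hFv]
    apply Finset.sum_congr rfl
    intro j _
    rw [hw1 j]
    simp [hemb, Real.norm_eq_abs, sq_abs, sq, WithLp.equiv_symm_apply]
  have hembadd : ∀ u v : Fin r → ℝ, emb u - emb v = emb (u - v) := by
    intro u v
    simp [hemb, map_sub]
  have hembinj : Function.Injective emb := by
    intro u v h
    have : F u = F v := (WithLp.equiv 2 _).symm.injective h
    exact F.toLinearEquiv.injective this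
  set embZ : (Fin r → ℤ) → EuclideanSpace ℝ (Fin (Module.finrank ℝ (Fin r → ℝ))) :=
    fun x => emb (fun i => (x i : ℝ)) with hembZ
  have hcast : Function.Injective (fun (x : Fin r → ℤ) => (fun i => (x i : ℝ))) := by
    intro u v h
    funext i
    have := congrFun h i
    simpa using this
  have hembZinj : Function.Injective embZ := fun u v h =>
    hcast (hembinj h)
  have hc₁' : (0:ℝ) < Real.sqrt c₁ := Real.sqrt_pos.2 hc₁
  have hbound : ∀ t : Finset (Fin r → ℤ), ↑t ⊆ S →
      (t.card : ℝ) ≤ (1 + 2 * Real.sqrt (c₂ / c₁)) ^ r := by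
    intro t ht
    set t' : Finset (EuclideanSpace ℝ (Fin (Module.finrank ℝ (Fin r → ℝ)))) :=
      t.image embZ with ht'
    have hcard : t'.card = t.card := Finset.card_image_of_injective t hembZinj
    have h1 : ∀ y ∈ t', ‖y‖ ≤ Real.sqrt c₂ := by
      intro y hy
      obtain ⟨x, hx, rfl⟩ := Finset.mem_image.mp hy
      have hxS : Q (fun i => (x i : ℝ)) ≤ c₂ := ht hx
      have h2 : ‖embZ x‖ ^ 2 ≤ c₂ := by
        rw [hembZ]; rw [hQnorm]; exact hxS
      calc ‖embZ x‖ = Real.sqrt (‖embZ x‖ ^ 2) := (Real.sqrt_sq (norm_nonneg _)).symm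
        _ ≤ Real.sqrt c₂ := Real.sqrt_le_sqrt h2
    have h2 : ∀ y ∈ t', ∀ z ∈ t', y ≠ z → Real.sqrt c₁ ≤ dist y z := by
      intro y hy z hz hyz
      obtain ⟨x, hx, rfl⟩ := Finset.mem_image.mp hy
      obtain ⟨x', hx', rfl⟩ := Finset.mem_image.mp hz
      have hne : x - x' ≠ 0 := by
        intro h
        exact hyz (by rw [sub_eq_zero] at h; rw [h])
      have hcastsub : (fun i => ((x - x') i : ℝ))
          = (fun i => (x i : ℝ)) - (fun i => (x' i : ℝ)) := by
        funext i; simp [Pi.sub_apply]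
      have hlo : c₁ ≤ Q (fun i => ((x - x') i : ℝ)) := hlow _ hne
      have hkey : c₁ ≤ ‖embZ x - embZ x'‖ ^ 2 := by
        rw [hembZ]
        simp only []
        rw [hembadd, ← hcastsub, hQnorm]
        exact hlo
      calc Real.sqrt c₁ ≤ Real.sqrt (‖embZ x - embZ x'‖ ^ 2) := Real.sqrt_le_sqrt hkey
        _ = ‖embZ x - embZ x'‖ := Real.sqrt_sq (norm_nonneg _)
        _ = dist (embZ x) (embZ x') := (dist_eq_norm _ _).symm
    have hpk := packing t' (Real.sqrt c₂) (Real.sqrt c₁) hc₁' (Real.sqrt_nonneg _) h1 h2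
    rw [hcard] at hpk
    have heq : (2 * Real.sqrt c₂ + Real.sqrt c₁) / Real.sqrt c₁
        = 1 + 2 * Real.sqrt (c₂ / c₁) := by
      rw [Real.sqrt_div hc₂.le]
      field_simp
      ring
    rw [heq, hn] at hpk
    exact hpk
  set B := (1 + 2 * Real.sqrt (c₂ / c₁)) ^ r with hB
  have hfin : S.Finite := by
    by_contra hinf
    obtain ⟨t, hts, htc⟩ :=
      (show S.Infinite from hinf).exists_subset_card_eq (⌊B⌋₊ + 1)
    have h1 := hbound t hts
    rw [htc] at h1
    have h2 : B < ((⌊B⌋₊ + 1 : ℕ) : ℝ) := by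
      push_cast
      exact Nat.lt_floor_add_one B
    linarith
  refine ⟨hfin, ?_⟩
  have hnc : S.ncard = hfin.toFinset.card := Set.ncard_eq_toFinset_card S hfin
  rw [hnc]
  exact hbound hfin.toFinset (by simp)
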